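/- arXiv:1408.4339 — 2 statements merged into one kernel-verified Lean document; each statement's English description precedes it below -/
import Mathlib

section
/- The linear dependence on [v]_{A_1} in the inequality ‖M(f)/v‖_{L^{1,∞}(v)} ≤ c[v]_{A_1}‖f‖_{L^1} is sharp. Precisely: for every δ ∈ (0,1), the weight v(x) = |x|^{δ−1} on ℝ belongs to A_1 with c₁/δ ≤ [v]_{A_1} ≤ c₂/δ for absolute constants c₁, c₂ > 0, and the function g(x) = δ⁻¹ x^{δ−1} χ_{(0,1)}(x) satisfies ‖g‖_{L^1(ℝ)} = δ⁻², while v({x ∈ ℝ : M g(x) > v(x)}) ≥ δ⁻³. Consequently, if φ : [1,∞) → (0,∞) is increasing and v({x ∈ ℝ : M f(x) > v(x)}) ≤ φ([v]_{A_1})·‖f‖_{L^1(ℝ)} holds for all v ∈ A_1(ℝ) and all f, then there is an absolute constant c > 0 with φ(t) ≥ c·t for all large t. -/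
open MeasureTheory ENNReal Set Filter

noncomputable section

/-- Nondegenerate (closed) intervals of `ℝ`. -/
def IsIntv (Q : Set ℝ) : Prop := ∃ a b : ℝ, a < b ∧ Q = Set.Icc a b

/-- A weight: a nonnegative locally integrable (measurable) function on `ℝ`. -/
def IsWeight (w : ℝ → ℝ) : Prop :=
  Measurable w ∧ (∀ x, 0 ≤ w x) ∧ LocallyIntegrable w volume

/-- `w(E) = ∫_E w dx`. -/
def wMeas (w : ℝ → ℝ) (E : Set ℝ) : ℝ≥0∞ :=
  ∫⁻ x in E, ENNReal.ofReal (w x)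

/-- The average `|Q|⁻¹ ∫_Q w`. -/
def avgE (w : ℝ → ℝ) (Q : Set ℝ) : ℝ≥0∞ :=
  (volume Q)⁻¹ * ∫⁻ x in Q, ENNReal.ofReal (w x)

/-- The `A_1` quantity of `w` over an interval `Q`. -/
def A1Q (w : ℝ → ℝ) (Q : Set ℝ) : ℝ≥0∞ :=
  avgE w Q * (essInf (fun x => ENNReal.ofReal (w x)) (volume.restrict Q))⁻¹

/-- The `A_1` constant `[w]_{A_1}` (supremum over all intervals). -/
def A1Const (w : ℝ → ℝ) : ℝ≥0∞ :=
  ⨆ (Q : Set ℝ) (_ : IsIntv Q), A1Q w Q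

/-- The Hardy–Littlewood maximal operator over intervals containing `x`. -/
def maxOp (f : ℝ → ℝ) (x : ℝ) : ℝ≥0∞ :=
  ⨆ (Q : Set ℝ) (_ : IsIntv Q) (_ : x ∈ Q), avgE (fun y => |f y|) Q

lemma lint_rpow {δ : ℝ} (hδ0 : 0 < δ) {a b : ℝ} (ha : 0 ≤ a) (hab : a ≤ b) :
    ∫⁻ y in Ioo a b, ENNReal.ofReal (y ^ (δ - 1)) = ENNReal.ofReal ((b ^ δ - a ^ δ) / δ) := by
  have hr : (-1 : ℝ) < δ - 1 := by linarith
  have hii : IntervalIntegrable (fun y : ℝ => y ^ (δ - 1)) volume a b :=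
    intervalIntegral.intervalIntegrable_rpow' hr
  have hint : IntegrableOn (fun y : ℝ => y ^ (δ - 1)) (Ioc a b) volume :=
    (intervalIntegrable_iff_integrableOn_Ioc_of_le hab).mp hii
  have hIoo : (volume : Measure ℝ).restrict (Ioo a b) = volume.restrict (Ioc a b) :=
    Measure.restrict_congr_set Ioo_ae_eq_Ioc
  rw [hIoo]
  rw [← ofReal_integral_eq_lintegral_ofReal hint ?nn]
  case nn =>
    filter_upwards [ae_restrict_mem measurableSet_Ioc] with y hy
    exact Real.rpow_nonneg (le_trans ha hy.1.le) _
  congr 1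
  rw [← intervalIntegral.integral_of_le hab, integral_rpow (Or.inl hr)]
  ring_nf

lemma lint_abs_rpow {δ : ℝ} (hδ0 : 0 < δ) {a b : ℝ} (ha : 0 ≤ a) (hab : a ≤ b) :
    ∫⁻ y in Ioo a b, ENNReal.ofReal (|y| ^ (δ - 1)) = ENNReal.ofReal ((b ^ δ - a ^ δ) / δ) := by
  rw [setLIntegral_congr_fun measurableSet_Ioo
    (fun y (hy : y ∈ Ioo a b) => by
      rw [abs_of_pos (lt_of_le_of_lt ha hy.1)]), lint_rpow hδ0 ha hab]

-- negative side via reflection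
lemma lint_abs_rpow_neg {δ : ℝ} (hδ0 : 0 < δ) {a b : ℝ} (hb : b ≤ 0) (hab : a ≤ b) :
    ∫⁻ y in Ioo a b, ENNReal.ofReal (|y| ^ (δ - 1))
      = ENNReal.ofReal (((-a) ^ δ - (-b) ^ δ) / δ) := by
  have hmap : Measure.map (fun x : ℝ => -x) volume = volume :=
    (Measure.measurePreserving_neg volume).map_eq
  have hmeas : Measurable fun y : ℝ => ENNReal.ofReal (|y| ^ (δ - 1)) := by
    measurability
  calc ∫⁻ y in Ioo a b, ENNReal.ofReal (|y| ^ (δ - 1)) ∂volume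
      = ∫⁻ y in Ioo a b, ENNReal.ofReal (|y| ^ (δ - 1)) ∂(Measure.map (fun x : ℝ => -x) volume) := by
        rw [hmap]
    _ = ∫⁻ x in (fun x : ℝ => -x) ⁻¹' Ioo a b, ENNReal.ofReal (|-x| ^ (δ - 1)) := by
        rw [setLIntegral_map measurableSet_Ioo hmeas measurable_neg]
    _ = ∫⁻ x in Ioo (-b) (-a), ENNReal.ofReal (|x| ^ (δ - 1)) := by
        congr 1
        · ext x; simp [neg_lt, lt_neg, and_comm]
        · ext x; rw [abs_neg]
    _ = ENNReal.ofReal (((-a) ^ δ - (-b) ^ δ) / δ) :=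
        lint_abs_rpow hδ0 (by linarith) (by linarith)


-- the key elementary inequality
lemma rpow_diff_le {δ : ℝ} (hδ0 : 0 < δ) (hδ1 : δ < 1) {a b : ℝ} (ha : 0 ≤ a) (hab : a ≤ b) :
    b ^ δ - a ^ δ ≤ b ^ (δ - 1) * (b - a) := by
  rcases eq_or_lt_of_le ha with h0 | hapos
  · rcases eq_or_lt_of_le hab with hb0 | hbpos
    · simp [← h0, ← hb0]
    · rw [← h0] at hbpos ⊢
      rw [Real.zero_rpow hδ0.ne', sub_zero, sub_zero, Real.rpow_sub_one hbpos.ne']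
      rw [div_mul_eq_mul_div, mul_div_assoc, div_self hbpos.ne', mul_one]
  · have hbpos : 0 < b := lt_of_lt_of_le hapos hab
    have h1 : b ^ (δ - 1) ≤ a ^ (δ - 1) :=
      Real.rpow_le_rpow_of_nonpos hapos hab (by linarith)
    have h2 : a ^ δ = a ^ (δ - 1) * a := by
      rw [Real.rpow_sub_one hapos.ne', div_mul_cancel₀ _ hapos.ne']
    have h3 : b ^ δ = b ^ (δ - 1) * b := by
      rw [Real.rpow_sub_one hbpos.ne', div_mul_cancel₀ _ hbpos.ne']
    have h4 : b ^ (δ - 1) * a ≤ a ^ (δ - 1) * a :=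
      mul_le_mul_of_nonneg_right h1 ha
    nlinarith [h4, h2, h3]

-- essInf lower bound on general interval
lemma essInf_ge {δ : ℝ} (hδ1 : δ < 1) {a b : ℝ} (hab : a < b) :
    ENNReal.ofReal ((max (-a) b) ^ (δ - 1)) ≤
      essInf (fun x => ENNReal.ofReal (|x| ^ (δ - 1))) (volume.restrict (Icc a b)) := by
  set m := max (-a) b with hm
  apply le_essInf_of_ae_le (hfbdd := by isBoundedDefault)
  have h0 : ∀ᵐ x ∂(volume.restrict (Icc a b)), x ≠ 0 := by
    rw [ae_iff]
    have hset : {x : ℝ | ¬ x ≠ 0} = ({0} : Set ℝ) := by ext x; simp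
    rw [hset, Measure.restrict_apply' measurableSet_Icc]
    exact measure_mono_null Set.inter_subset_left Real.volume_singleton
  filter_upwards [h0, ae_restrict_mem measurableSet_Icc] with x hx0 hx
  apply ENNReal.ofReal_le_ofReal
  apply Real.rpow_le_rpow_of_nonpos (abs_pos.mpr hx0) _ (by linarith)
  rw [abs_le]
  constructor
  · linarith [hx.1, le_max_left (-a) b]
  · linarith [hx.2, le_max_right (-a) b]

lemma essInf_le_one {δ : ℝ} (hδ0 : 0 < δ) (hδ1 : δ < 1) :
    essInf (fun x => ENNReal.ofReal (|x| ^ (δ - 1))) (volume.restrict (Icc (0:ℝ) 1)) ≤ 1 := by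
  apply ENNReal.le_of_forall_pos_le_add
  intro ε hε _
  set r : ℝ := ((1:ℝ) + ε) ^ ((δ - 1)⁻¹) with hr
  have hε' : (0:ℝ) < ε := hε
  have h1ε : (1:ℝ) < 1 + ε := by linarith
  have hrpos : 0 < r := Real.rpow_pos_of_pos (by linarith) _
  have hrlt1 : r < 1 :=
    Real.rpow_lt_one_of_one_lt_of_neg h1ε (by
      apply inv_neg''.mpr; linarith)
  have hrpow : r ^ (δ - 1) = 1 + ε := by
    rw [hr, ← Real.rpow_mul (by linarith), inv_mul_cancel₀ (by linarith : δ - 1 ≠ 0),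
      Real.rpow_one]
  apply liminf_le_of_frequently_le'
  rw [frequently_ae_iff]
  set S := {x : ℝ | ENNReal.ofReal (|x| ^ (δ - 1)) ≤ 1 + (ε : ℝ≥0∞)} with hS
  intro hcon
  have hsub : Icc r 1 ⊆ S ∩ Icc (0:ℝ) 1 := by
    intro x hx
    have hx0 : 0 < x := lt_of_lt_of_le hrpos hx.1
    constructor
    · have : x ^ (δ - 1) ≤ r ^ (δ - 1) :=
        Real.rpow_le_rpow_of_nonpos hrpos hx.1 (by linarith)
      have h2 : ENNReal.ofReal (|x| ^ (δ - 1)) ≤ ENNReal.ofReal (1 + (ε:ℝ)) := by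
        apply ENNReal.ofReal_le_ofReal
        rw [abs_of_pos hx0]; rw [hrpow] at this; exact this
      rw [ENNReal.ofReal_add (by norm_num) ε.coe_nonneg, ENNReal.ofReal_one,
        ENNReal.ofReal_coe_nnreal] at h2
      exact h2
    · exact ⟨hx0.le, hx.2⟩
  have : (volume.restrict (Icc (0:ℝ) 1)) S = volume (S ∩ Icc (0:ℝ) 1) :=
    Measure.restrict_apply' measurableSet_Icc
  rw [this] at hcon
  have hpos : (0:ℝ≥0∞) < volume (S ∩ Icc (0:ℝ) 1) := by
    calc (0:ℝ≥0∞) < ENNReal.ofReal (1 - r) := ENNReal.ofReal_pos.mpr (by linarith)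
    _ = volume (Icc r 1) := (Real.volume_Icc).symm
    _ ≤ volume (S ∩ Icc (0:ℝ) 1) := measure_mono hsub
  exact hpos.ne' hcon

lemma A1_lower {δ : ℝ} (hδ0 : 0 < δ) (hδ1 : δ < 1) :
    ENNReal.ofReal (1 / δ) ≤ A1Const (fun x : ℝ => |x| ^ (δ - 1)) := by
  have havg : avgE (fun x : ℝ => |x| ^ (δ - 1)) (Icc 0 1) = ENNReal.ofReal (1 / δ) := by
    unfold avgE
    rw [Real.volume_Icc]
    have hO : (volume : Measure ℝ).restrict (Icc (0:ℝ) 1) = volume.restrict (Ioo (0:ℝ) 1) :=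
      (Measure.restrict_congr_set Ioo_ae_eq_Icc).symm
    rw [hO, lint_abs_rpow hδ0 le_rfl zero_le_one]
    norm_num [Real.one_rpow, Real.zero_rpow hδ0.ne']
  have hQ : ENNReal.ofReal (1 / δ) ≤ A1Q (fun x : ℝ => |x| ^ (δ - 1)) (Icc 0 1) := by
    unfold A1Q
    rw [havg]
    have hinv : (1:ℝ≥0∞) ≤ (essInf (fun x => ENNReal.ofReal (|x| ^ (δ - 1)))
        (volume.restrict (Icc (0:ℝ) 1)))⁻¹ :=
      ENNReal.one_le_inv.mpr (essInf_le_one hδ0 hδ1)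
    exact le_mul_of_one_le_right' hinv
  refine le_trans hQ ?_
  exact le_iSup₂_of_le (Icc 0 1) ⟨0, 1, one_pos, rfl⟩ le_rfl

lemma A1_upper {δ : ℝ} (hδ0 : 0 < δ) (hδ1 : δ < 1) :
    A1Const (fun x : ℝ => |x| ^ (δ - 1)) ≤ ENNReal.ofReal (2 / δ) := by
  apply iSup₂_le
  rintro Q ⟨a, b, hab, rfl⟩
  set m := max (-a) b with hm
  have hmpos : 0 < m := by
    rcases lt_or_ge 0 b with h | h
    · exact lt_of_lt_of_le h (le_max_right _ _)
    · exact lt_of_lt_of_le (by linarith : (0:ℝ) < -a) (le_max_left _ _)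
  have hmr : (0:ℝ) < m ^ (δ - 1) := Real.rpow_pos_of_pos hmpos _
  -- integral bound
  have hIcc : (volume : Measure ℝ).restrict (Icc a b) = volume.restrict (Ioo a b) :=
    (Measure.restrict_congr_set Ioo_ae_eq_Icc).symm
  have hint : ∫⁻ x in Icc a b, ENNReal.ofReal (|x| ^ (δ - 1))
      ≤ ENNReal.ofReal ((2 / δ) * m ^ (δ - 1) * (b - a)) := by
    rw [hIcc]
    rcases le_or_gt 0 a with ha | ha
    · -- positive case, m = b
      have hmb : m = b := by rw [hm, max_eq_right (by linarith : -a ≤ b)]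
      rw [lint_abs_rpow hδ0 ha hab.le]
      apply ENNReal.ofReal_le_ofReal
      have hd := rpow_diff_le hδ0 hδ1 ha hab.le
      have h1 : (0:ℝ) ≤ b ^ (δ - 1) * (b - a) :=
        mul_nonneg (Real.rpow_nonneg (by linarith) _) (by linarith)
      have h2 : b ^ δ - a ^ δ ≤ 2 * (b ^ (δ - 1) * (b - a)) := by nlinarith [hd, h1]
      calc (b ^ δ - a ^ δ) / δ ≤ 2 * (b ^ (δ - 1) * (b - a)) / δ := by gcongr
        _ = 2 / δ * m ^ (δ - 1) * (b - a) := by rw [hmb]; ring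
    · rcases le_or_gt b 0 with hb | hb
      · -- negative case, m = -a
        have hmb : m = -a := by rw [hm, max_eq_left (by linarith : b ≤ -a)]
        rw [lint_abs_rpow_neg hδ0 hb hab.le]
        apply ENNReal.ofReal_le_ofReal
        have hd := rpow_diff_le hδ0 hδ1 (by linarith : (0:ℝ) ≤ -b) (by linarith : -b ≤ -a)
        have h1 : (0:ℝ) ≤ (-a) ^ (δ - 1) * (b - a) := by
          have : (0:ℝ) < (-a) ^ (δ - 1) := Real.rpow_pos_of_pos (by linarith) _
          nlinarith
        have h2 : -a - -b = b - a := by ring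
        rw [h2] at hd
        have h3 : (-a) ^ δ - (-b) ^ δ ≤ 2 * ((-a) ^ (δ - 1) * (b - a)) := by nlinarith [hd, h1]
        calc ((-a) ^ δ - (-b) ^ δ) / δ ≤ 2 * ((-a) ^ (δ - 1) * (b - a)) / δ := by gcongr
          _ = 2 / δ * m ^ (δ - 1) * (b - a) := by rw [hmb]; ring
      · -- straddling case
        have hmba : m ≤ b - a := by rw [hm]; apply max_le <;> linarith
        calc ∫⁻ x in Ioo a b, ENNReal.ofReal (|x| ^ (δ - 1))
            ≤ ∫⁻ x in Ioc a 0 ∪ Ioc 0 b, ENNReal.ofReal (|x| ^ (δ - 1)) := by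
              apply lintegral_mono_set
              rw [Set.Ioc_union_Ioc_eq_Ioc ha.le hb.le]
              exact Ioo_subset_Ioc_self
          _ ≤ (∫⁻ x in Ioc a 0, ENNReal.ofReal (|x| ^ (δ - 1)))
              + ∫⁻ x in Ioc 0 b, ENNReal.ofReal (|x| ^ (δ - 1)) :=
              lintegral_union_le _ _ _
          _ = ENNReal.ofReal ((-a) ^ δ / δ) + ENNReal.ofReal (b ^ δ / δ) := by
              rw [← Measure.restrict_congr_set Ioo_ae_eq_Ioc,
                ← Measure.restrict_congr_set Ioo_ae_eq_Ioc,
                lint_abs_rpow_neg hδ0 le_rfl ha.le, lint_abs_rpow hδ0 le_rfl hb.le, neg_zero,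
                Real.zero_rpow hδ0.ne']
              norm_num
          _ ≤ ENNReal.ofReal ((2 / δ) * m ^ (δ - 1) * (b - a)) := by
              rw [← ENNReal.ofReal_add
                (div_nonneg (Real.rpow_nonneg (by linarith) _) hδ0.le)
                (div_nonneg (Real.rpow_nonneg (by linarith) _) hδ0.le)]
              apply ENNReal.ofReal_le_ofReal
              have hma : (-a) ^ δ ≤ m ^ δ :=
                Real.rpow_le_rpow (by linarith) (le_max_left _ _) hδ0.le
              have hmbb : b ^ δ ≤ m ^ δ :=
                Real.rpow_le_rpow (by linarith) (le_max_right _ _) hδ0.le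
              have hmδ : m ^ δ = m ^ (δ - 1) * m := by
                rw [Real.rpow_sub_one hmpos.ne', div_mul_cancel₀ _ hmpos.ne']
              have h4 : m ^ (δ - 1) * m ≤ m ^ (δ - 1) * (b - a) :=
                mul_le_mul_of_nonneg_left hmba hmr.le
              have h5 : (-a) ^ δ + b ^ δ ≤ 2 * (m ^ (δ - 1) * (b - a)) := by
                nlinarith [hma, hmbb, hmδ, h4]
              calc (-a) ^ δ / δ + b ^ δ / δ = ((-a) ^ δ + b ^ δ) / δ := by ring
                _ ≤ 2 * (m ^ (δ - 1) * (b - a)) / δ := by gcongr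
                _ = 2 / δ * m ^ (δ - 1) * (b - a) := by ring
  -- average bound
  have havg : avgE (fun x : ℝ => |x| ^ (δ - 1)) (Icc a b)
      ≤ ENNReal.ofReal ((2 / δ) * m ^ (δ - 1)) := by
    unfold avgE
    rw [Real.volume_Icc]
    have hba : (0:ℝ) < b - a := by linarith
    calc (ENNReal.ofReal (b - a))⁻¹ * ∫⁻ x in Icc a b, ENNReal.ofReal (|x| ^ (δ - 1))
        ≤ (ENNReal.ofReal (b - a))⁻¹ * ENNReal.ofReal ((2 / δ) * m ^ (δ - 1) * (b - a)) :=
          mul_le_mul_right hint _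
      _ = ENNReal.ofReal ((2 / δ) * m ^ (δ - 1)) := by
          rw [ENNReal.ofReal_mul (by positivity : (0:ℝ) ≤ 2 / δ * m ^ (δ - 1)),
            mul_comm ((ENNReal.ofReal (b - a))⁻¹) _, mul_assoc,
            ENNReal.mul_inv_cancel (ENNReal.ofReal_pos.mpr hba).ne' ENNReal.ofReal_ne_top,
            mul_one]
  -- conclude
  unfold A1Q
  calc avgE (fun x : ℝ => |x| ^ (δ - 1)) (Icc a b) *
        (essInf (fun x => ENNReal.ofReal (|x| ^ (δ - 1))) (volume.restrict (Icc a b)))⁻¹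
      ≤ ENNReal.ofReal ((2 / δ) * m ^ (δ - 1)) * (ENNReal.ofReal (m ^ (δ - 1)))⁻¹ :=
        mul_le_mul' havg (ENNReal.inv_le_inv' (essInf_ge hδ1 hab))
    _ = ENNReal.ofReal (2 / δ) := by
        rw [ENNReal.ofReal_mul (by positivity : (0:ℝ) ≤ 2 / δ), mul_assoc,
          ENNReal.mul_inv_cancel (ENNReal.ofReal_pos.mpr hmr).ne' ENNReal.ofReal_ne_top,
          mul_one]

-- pointwise abs of g
lemma g_abs {δ : ℝ} (hδ0 : 0 < δ) (x : ℝ) :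
    ENNReal.ofReal |Set.indicator (Set.Ioo (0:ℝ) 1) (fun y => δ⁻¹ * y ^ (δ - 1)) x|
      = (Set.Ioo (0:ℝ) 1).indicator (fun y => ENNReal.ofReal (δ⁻¹ * y ^ (δ - 1))) x := by
  by_cases hx : x ∈ Set.Ioo (0:ℝ) 1
  · rw [Set.indicator_of_mem hx, Set.indicator_of_mem hx,
      abs_of_nonneg (mul_nonneg (inv_nonneg.mpr hδ0.le) (Real.rpow_nonneg hx.1.le _))]
  · rw [Set.indicator_of_notMem hx, Set.indicator_of_notMem hx, abs_zero,
      ENNReal.ofReal_zero]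

lemma hmeas_rpow {δ : ℝ} : Measurable fun y : ℝ => ENNReal.ofReal (y ^ (δ - 1)) := by
  measurability

-- item 3
lemma g_L1 {δ : ℝ} (hδ0 : 0 < δ) (hδ1 : δ < 1) :
    (∫⁻ x : ℝ, ENNReal.ofReal |Set.indicator (Set.Ioo (0:ℝ) 1) (fun y => δ⁻¹ * y ^ (δ - 1)) x|)
      = ENNReal.ofReal (1 / δ ^ 2) := by
  simp_rw [g_abs hδ0]
  rw [lintegral_indicator measurableSet_Ioo]
  simp_rw [ENNReal.ofReal_mul (inv_nonneg.mpr hδ0.le)]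
  rw [lintegral_const_mul _ hmeas_rpow, lint_rpow hδ0 le_rfl zero_le_one,
    ← ENNReal.ofReal_mul (inv_nonneg.mpr hδ0.le)]
  congr 1
  rw [Real.one_rpow, Real.zero_rpow hδ0.ne']
  field_simp
  ring

-- lower bound for integral of |g| over Icc 0 t
lemma g_lint_ge {δ : ℝ} (hδ0 : 0 < δ) {s t : ℝ} (hs0 : 0 < s) (hs1 : s ≤ 1) (hst : s ≤ t) :
    ENNReal.ofReal (δ⁻¹ * (s ^ δ / δ)) ≤
      ∫⁻ y in Icc 0 t,
        ENNReal.ofReal |Set.indicator (Set.Ioo (0:ℝ) 1) (fun y => δ⁻¹ * y ^ (δ - 1)) y| := by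
  have h1 : ∫⁻ y in Ioo 0 s,
      ENNReal.ofReal |Set.indicator (Set.Ioo (0:ℝ) 1) (fun y => δ⁻¹ * y ^ (δ - 1)) y|
      = ENNReal.ofReal (δ⁻¹ * (s ^ δ / δ)) := by
    have heq : ∀ y ∈ Ioo (0:ℝ) s,
        ENNReal.ofReal |Set.indicator (Set.Ioo (0:ℝ) 1) (fun y => δ⁻¹ * y ^ (δ - 1)) y|
          = ENNReal.ofReal δ⁻¹ * ENNReal.ofReal (y ^ (δ - 1)) := by
      intro y hy
      rw [g_abs hδ0,
        Set.indicator_of_mem (show y ∈ Set.Ioo (0:ℝ) 1 from ⟨hy.1, lt_of_lt_of_le hy.2 hs1⟩),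
        ENNReal.ofReal_mul (inv_nonneg.mpr hδ0.le)]
    rw [setLIntegral_congr_fun measurableSet_Ioo heq,
      lintegral_const_mul _ hmeas_rpow, lint_rpow hδ0 le_rfl hs0.le,
      ← ENNReal.ofReal_mul (inv_nonneg.mpr hδ0.le), Real.zero_rpow hδ0.ne', sub_zero]
  rw [← h1]
  exact lintegral_mono_set (fun y hy => ⟨le_of_lt hy.1, le_trans (le_of_lt hy.2) hst⟩)

-- maxOp lower bound
lemma maxOp_ge (f : ℝ → ℝ) {x t : ℝ} (ht : 0 < t) (hx : x ∈ Icc (0:ℝ) t) :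
    avgE (fun y => |f y|) (Icc 0 t) ≤ maxOp f x := by
  unfold maxOp
  apply le_iSup_of_le (Icc 0 t)
  apply le_iSup_of_le (⟨0, t, ht, rfl⟩ : IsIntv (Icc 0 t))
  exact le_iSup_of_le hx le_rfl

lemma item4 {δ : ℝ} (hδ0 : 0 < δ) (hδ1 : δ < 1) :
    ENNReal.ofReal (1 / δ ^ 3) ≤
      wMeas (fun x : ℝ => |x| ^ (δ - 1))
        {x : ℝ | ENNReal.ofReal (|x| ^ (δ - 1)) <
          maxOp (Set.indicator (Set.Ioo (0 : ℝ) 1) (fun y => δ⁻¹ * y ^ (δ - 1))) x} := by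
  set g := Set.indicator (Set.Ioo (0 : ℝ) 1) (fun y => δ⁻¹ * y ^ (δ - 1)) with hg
  set X : ℝ := ((1:ℝ) / δ ^ 2) ^ (δ⁻¹ : ℝ) with hX
  have hδ2 : (1:ℝ) < 1 / δ ^ 2 := by
    rw [lt_div_iff₀ (by positivity)]; nlinarith
  have hXpos : 0 < X := Real.rpow_pos_of_pos (by positivity) _
  have hXδ : X ^ δ = 1 / δ ^ 2 := by
    rw [hX, ← Real.rpow_mul (by positivity), inv_mul_cancel₀ hδ0.ne', Real.rpow_one]
  have hsub : Ioo 0 X ⊆ {x : ℝ | ENNReal.ofReal (|x| ^ (δ - 1)) < maxOp g x} := by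
    rintro x ⟨hx0, hxX⟩
    have hmem : x ∈ Icc (0:ℝ) x := ⟨hx0.le, le_rfl⟩
    have havg : (ENNReal.ofReal x)⁻¹ *
        ENNReal.ofReal (δ⁻¹ * (min x 1 ^ δ / δ)) ≤ maxOp g x := by
      refine le_trans ?_ (maxOp_ge g hx0 hmem)
      unfold avgE
      rw [Real.volume_Icc, sub_zero]
      refine mul_le_mul_right ?_ _
      rcases le_or_gt x 1 with hx1 | hx1
      · rw [min_eq_left hx1]
        exact g_lint_ge hδ0 hx0 hx1 le_rfl
      · rw [min_eq_right hx1.le]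
        exact g_lint_ge hδ0 one_pos le_rfl hx1.le
    have hcalc : (ENNReal.ofReal x)⁻¹ * ENNReal.ofReal (δ⁻¹ * (min x 1 ^ δ / δ))
        = ENNReal.ofReal (δ⁻¹ * (min x 1 ^ δ / δ) / x) := by
      rw [ENNReal.ofReal_div_of_pos hx0, mul_comm]; rfl
    have hxd : x ^ (δ - 1) = x ^ δ / x := Real.rpow_sub_one hx0.ne' _
    have hreal : x ^ (δ - 1) < δ⁻¹ * (min x 1 ^ δ / δ) / x := by
      rcases le_or_gt x 1 with hx1 | hx1
      · rw [min_eq_left hx1, hxd]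
        have h0 : 0 < x ^ δ := Real.rpow_pos_of_pos hx0 _
        have heq : δ⁻¹ * (x ^ δ / δ) / x = x ^ δ / δ ^ 2 / x := by ring
        rw [heq, div_lt_div_iff₀ hx0 hx0]
        have hkey : x ^ δ < x ^ δ / δ ^ 2 := by
          rw [lt_div_iff₀ (by positivity)]
          nlinarith [mul_pos h0 (show (0:ℝ) < 1 - δ ^ 2 by nlinarith)]
        nlinarith [hkey, hx0]
      · rw [min_eq_right hx1.le, Real.one_rpow, hxd]
        have hxu : x ^ δ < 1 / δ ^ 2 := by
          rw [← hXδ]; exact Real.rpow_lt_rpow hx0.le hxX hδ0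
        have heq : δ⁻¹ * (1 / δ) / x = (1 / δ ^ 2) / x := by ring
        rw [heq, div_lt_div_iff₀ hx0 hx0]
        nlinarith [hxu, hx0]
    have hminpos : 0 < min x 1 ^ δ := Real.rpow_pos_of_pos (lt_min hx0 one_pos) _
    show ENNReal.ofReal (|x| ^ (δ - 1)) < maxOp g x
    calc ENNReal.ofReal (|x| ^ (δ - 1)) = ENNReal.ofReal (x ^ (δ - 1)) := by
          rw [abs_of_pos hx0]
      _ < ENNReal.ofReal (δ⁻¹ * (min x 1 ^ δ / δ) / x) :=
          (ENNReal.ofReal_lt_ofReal_iff (by positivity)).mpr hreal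
      _ = (ENNReal.ofReal x)⁻¹ * ENNReal.ofReal (δ⁻¹ * (min x 1 ^ δ / δ)) := hcalc.symm
      _ ≤ maxOp g x := havg
  calc ENNReal.ofReal (1 / δ ^ 3)
      = ∫⁻ x in Ioo 0 X, ENNReal.ofReal (|x| ^ (δ - 1)) := by
        rw [lint_abs_rpow hδ0 le_rfl hXpos.le, Real.zero_rpow hδ0.ne', sub_zero, hXδ]
        congr 1
        rw [div_div, ← pow_succ]
    _ ≤ wMeas (fun x : ℝ => |x| ^ (δ - 1))
        {x : ℝ | ENNReal.ofReal (|x| ^ (δ - 1)) < maxOp g x} :=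
        lintegral_mono_set hsub

lemma weight_isWeight {δ : ℝ} (hδ0 : 0 < δ) (hδ1 : δ < 1) :
    IsWeight (fun x : ℝ => |x| ^ (δ - 1)) := by
  refine ⟨by measurability, fun x => Real.rpow_nonneg (abs_nonneg x) _, ?_⟩
  have hpos : ∀ R : ℝ, 0 ≤ R →
      IntegrableOn (fun x : ℝ => |x| ^ (δ - 1)) (Icc 0 R) volume := by
    intro R hR
    have hii : IntervalIntegrable (fun y : ℝ => y ^ (δ - 1)) volume 0 R :=
      intervalIntegral.intervalIntegrable_rpow' (by linarith)
    have h1 : IntegrableOn (fun y : ℝ => y ^ (δ - 1)) (Ioc 0 R) volume :=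
      (intervalIntegrable_iff_integrableOn_Ioc_of_le hR).mp hii
    have h2 : IntegrableOn (fun y : ℝ => y ^ (δ - 1)) (Icc 0 R) volume := by
      unfold IntegrableOn at h1 ⊢
      rwa [← Measure.restrict_congr_set Ioc_ae_eq_Icc]
    apply h2.congr_fun _ measurableSet_Icc
    intro x hx
    simp only []
    rw [abs_of_nonneg hx.1]
  have hneg : ∀ R : ℝ, 0 ≤ R →
      IntegrableOn (fun x : ℝ => |x| ^ (δ - 1)) (Icc (-R) 0) volume := by
    intro R hR
    have hemb : MeasurableEmbedding (fun x : ℝ => -x) :=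
      (Homeomorph.neg ℝ).measurableEmbedding
    have hmapvol : Measure.map (fun x : ℝ => -x) volume = volume :=
      (Measure.measurePreserving_neg volume).map_eq
    unfold IntegrableOn
    have hrestr : (volume : Measure ℝ).restrict (Icc (-R) 0)
        = Measure.map (fun x : ℝ => -x)
            (volume.restrict ((fun x : ℝ => -x) ⁻¹' (Icc (-R) 0))) := by
      rw [← Measure.restrict_map hemb.measurable measurableSet_Icc, hmapvol]
    rw [hrestr, hemb.integrable_map_iff]
    have hpre : (fun x : ℝ => -x) ⁻¹' (Icc (-R) 0) = Icc 0 R := by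
      ext x
      simp only [Set.mem_preimage, Set.mem_Icc]
      constructor <;> intro h <;> constructor <;> linarith [h.1, h.2]
    rw [hpre]
    have hfun : ((fun x : ℝ => |x| ^ (δ - 1)) ∘ (fun x : ℝ => -x))
        = fun x : ℝ => |x| ^ (δ - 1) := by
      funext x; simp [abs_neg]
    rw [hfun]
    exact hpos R hR
  rw [locallyIntegrable_iff]
  intro k hk
  obtain ⟨R, hRsub⟩ := hk.isBounded.subset_closedBall 0
  set R' := max R 0 with hR'
  have hsub2 : k ⊆ Icc (-R') R' := by
    refine hRsub.trans ?_
    refine (Metric.closedBall_subset_closedBall (le_max_left R 0)).trans ?_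
    rw [Real.closedBall_eq_Icc, zero_sub, zero_add]
  refine IntegrableOn.mono_set ?_ hsub2
  have := (hneg R' (le_max_right R 0)).union (hpos R' (le_max_right R 0))
  rwa [Set.Icc_union_Icc_eq_Icc (by simp [hR'] : -R' ≤ 0) (le_max_right R 0)] at this

/-- Sharpness of the linear dependence on `[v]_{A_1}`: for `δ ∈ (0,1)` the
weight `v(x) = |x|^{δ-1}` has `[v]_{A_1} ≍ 1/δ`, the function `g = δ⁻¹ x^{δ-1} χ_{(0,1)}` has
`‖g‖_{L¹} = δ⁻²` while `v({Mg > v}) ≥ δ⁻³`; consequently any increasing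
`φ : [1,∞) → (0,∞)` with `v({Mf > v}) ≤ φ([v]_{A_1}) ‖f‖_{L¹}` for all `v ∈ A_1`, `f`
satisfies `φ(t) ≥ c t` for all large `t`. -/
theorem stmt2 :
    (∃ c₁ c₂ : ℝ, 0 < c₁ ∧ 0 < c₂ ∧
      ∀ δ : ℝ, 0 < δ → δ < 1 →
        ENNReal.ofReal (c₁ / δ) ≤ A1Const (fun x : ℝ => |x| ^ (δ - 1)) ∧
        A1Const (fun x : ℝ => |x| ^ (δ - 1)) ≤ ENNReal.ofReal (c₂ / δ) ∧
        (∫⁻ x : ℝ,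
            ENNReal.ofReal |Set.indicator (Set.Ioo (0 : ℝ) 1) (fun y => δ⁻¹ * y ^ (δ - 1)) x|)
          = ENNReal.ofReal (1 / δ ^ 2) ∧
        ENNReal.ofReal (1 / δ ^ 3) ≤
          wMeas (fun x : ℝ => |x| ^ (δ - 1))
            {x : ℝ | ENNReal.ofReal (|x| ^ (δ - 1)) <
              maxOp (Set.indicator (Set.Ioo (0 : ℝ) 1) (fun y => δ⁻¹ * y ^ (δ - 1))) x}) ∧
    ∀ φ : ℝ → ℝ, MonotoneOn φ (Set.Ici 1) → (∀ s, 1 ≤ s → 0 < φ s) →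
      (∀ v : ℝ → ℝ, IsWeight v → A1Const v ≠ ∞ →
        ∀ f : ℝ → ℝ,
          wMeas v {x : ℝ | ENNReal.ofReal (v x) < maxOp f x} ≤
            ENNReal.ofReal (φ (A1Const v).toReal) * ∫⁻ x, ENNReal.ofReal |f x|) →
      ∃ c : ℝ, 0 < c ∧ ∃ t₀ : ℝ, ∀ t, t₀ ≤ t → c * t ≤ φ t := by
  constructor
  · refine ⟨1, 2, one_pos, two_pos, fun δ hδ0 hδ1 => ?_⟩
    refine ⟨by simpa using A1_lower hδ0 hδ1, A1_upper hδ0 hδ1, g_L1 hδ0 hδ1, item4 hδ0 hδ1⟩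
  · intro φ hmono hpos H
    refine ⟨1/2, by norm_num, 3, fun t ht => ?_⟩
    have ht0 : (0:ℝ) < t := by linarith
    set δ : ℝ := 2 / t with hδ
    have hδ0 : 0 < δ := by positivity
    have hδ1 : δ < 1 := by rw [hδ, div_lt_one ht0]; linarith
    have h1 := A1_lower hδ0 hδ1
    have h2 := A1_upper hδ0 hδ1
    have h2δ : 2 / δ = t := by rw [hδ]; field_simp
    have hAne : A1Const (fun x : ℝ => |x| ^ (δ - 1)) ≠ ∞ :=
      ne_top_of_le_ne_top ENNReal.ofReal_ne_top h2
    have H2 := H (fun x : ℝ => |x| ^ (δ - 1)) (weight_isWeight hδ0 hδ1) hAne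
      (Set.indicator (Set.Ioo (0 : ℝ) 1) (fun y => δ⁻¹ * y ^ (δ - 1)))
    set T := (A1Const (fun x : ℝ => |x| ^ (δ - 1))).toReal with hT
    have hT_le : T ≤ t := by
      rw [← h2δ]
      exact ENNReal.toReal_le_of_le_ofReal (by positivity) h2
    have hT_ge : 1 / δ ≤ T := (ENNReal.ofReal_le_iff_le_toReal hAne).mp h1
    have hδinv : 1 / δ = t / 2 := by rw [hδ]; field_simp
    have hT1 : (1:ℝ) ≤ T := by rw [hδinv] at hT_ge; linarith
    have hchain : ENNReal.ofReal (1 / δ ^ 3) ≤ ENNReal.ofReal (φ T * (1 / δ ^ 2)) := by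
      calc ENNReal.ofReal (1 / δ ^ 3)
          ≤ wMeas (fun x : ℝ => |x| ^ (δ - 1))
            {x : ℝ | ENNReal.ofReal (|x| ^ (δ - 1)) <
              maxOp (Set.indicator (Set.Ioo (0 : ℝ) 1) (fun y => δ⁻¹ * y ^ (δ - 1))) x} :=
            item4 hδ0 hδ1
        _ ≤ ENNReal.ofReal (φ T) * ∫⁻ x, ENNReal.ofReal
              |Set.indicator (Set.Ioo (0 : ℝ) 1) (fun y => δ⁻¹ * y ^ (δ - 1)) x| := H2
        _ = ENNReal.ofReal (φ T * (1 / δ ^ 2)) := by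
            rw [g_L1 hδ0 hδ1, ← ENNReal.ofReal_mul (hpos T hT1).le]
    have hreal : 1 / δ ^ 3 ≤ φ T * (1 / δ ^ 2) :=
      (ENNReal.ofReal_le_ofReal_iff
        (mul_nonneg (hpos T hT1).le (by positivity))).mp hchain
    have hφT : 1 / δ ≤ φ T := by
      have hd2 : (0:ℝ) < δ ^ 2 := by positivity
      have e1 : φ T * (1 / δ ^ 2) * δ ^ 2 = φ T := by field_simp
      have e2 : 1 / δ ^ 3 * δ ^ 2 = 1 / δ := by field_simp
      linarith [mul_le_mul_of_nonneg_right hreal hd2.le, e1, e2]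
    have hφt : φ T ≤ φ t := hmono hT1 (by linarith : (1:ℝ) ≤ t) hT_le
    rw [hδinv] at hφT
    linarith
end
end

section
/- The mixed weak type estimate with v = Mw fails in general: there exists a weight w on ℝ such that the inequality ‖M(f)/Mw‖_{L^{1,∞}(Mw)} ≤ c·‖f‖_{L^1(ℝ)}, i.e. sup_{t>0} t·(Mw)({x : M f(x) > t·Mw(x)}) ≤ c ∫|f|dx, does not hold for any finite constant c uniformly over all f ∈ L^1(ℝ). -/
open MeasureTheory ENNReal Set Filter

noncomputable section

/-- Our counterexample weight: the indicator of `[0,1]`. -/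
def myW : ℝ → ℝ := (Set.Icc (0:ℝ) 1).indicator (fun _ => (1:ℝ))

lemma myW_nonneg (x : ℝ) : 0 ≤ myW x := by
  unfold myW; by_cases h : x ∈ Set.Icc (0:ℝ) 1 <;> simp [Set.indicator_apply, h]

lemma myW_ofReal_abs (y : ℝ) :
    ENNReal.ofReal |myW y| = (Set.Icc (0:ℝ) 1).indicator (fun _ => (1:ℝ≥0∞)) y := by
  unfold myW
  by_cases h : y ∈ Set.Icc (0:ℝ) 1 <;> simp [Set.indicator_apply, h]

/-- Key computation: `∫ |myW| dμ = μ([0,1])`. -/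
lemma myW_lintegral (μ : Measure ℝ) :
    ∫⁻ y, ENNReal.ofReal |myW y| ∂μ = μ (Set.Icc (0:ℝ) 1) := by
  simp only [myW_ofReal_abs]
  rw [lintegral_indicator measurableSet_Icc]
  simp

lemma myW_avg (Q : Set ℝ) :
    avgE (fun y => |myW y|) Q = (volume Q)⁻¹ * volume (Set.Icc (0:ℝ) 1 ∩ Q) := by
  unfold avgE
  rw [myW_lintegral, Measure.restrict_apply measurableSet_Icc]

lemma myW_max_le_one (x : ℝ) : maxOp myW x ≤ 1 := by
  unfold maxOp
  refine iSup_le fun Q => iSup_le fun hQ => iSup_le fun _ => ?_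
  rw [myW_avg]
  calc (volume Q)⁻¹ * volume (Set.Icc (0:ℝ) 1 ∩ Q)
      ≤ (volume Q)⁻¹ * volume Q :=
        mul_le_mul_right (measure_mono Set.inter_subset_right) _
    _ ≤ 1 := ENNReal.inv_mul_le_one _

lemma myW_max_pos (x : ℝ) : 0 < maxOp myW x := by
  set Q : Set ℝ := Set.Icc (min x 0) (max x 1) with hQdef
  have hab : min x 0 < max x 1 :=
    lt_of_le_of_lt (min_le_right x 0) (lt_of_lt_of_le zero_lt_one (le_max_right x 1))
  have hQ : IsIntv Q := ⟨_, _, hab, rfl⟩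
  have hxQ : x ∈ Q := ⟨min_le_left x 0, le_max_left x 1⟩
  have hsub : Set.Icc (0:ℝ) 1 ⊆ Q :=
    Set.Icc_subset_Icc (min_le_right x 0) (le_max_right x 1)
  have hle : avgE (fun y => |myW y|) Q ≤ maxOp myW x := by
    unfold maxOp
    exact le_iSup_of_le Q (le_iSup_of_le hQ (le_iSup_of_le hxQ le_rfl))
  refine lt_of_lt_of_le ?_ hle
  rw [myW_avg, Set.inter_eq_left.2 hsub]
  have hvol : volume (Set.Icc (0:ℝ) 1) = 1 := by simp
  rw [hvol, mul_one]
  simp only [ENNReal.inv_pos]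
  rw [hQdef, Real.volume_Icc]
  exact ENNReal.ofReal_ne_top

lemma myW_max_lb {x : ℝ} (hx : 1 < x) : ENNReal.ofReal x⁻¹ ≤ maxOp myW x := by
  set Q : Set ℝ := Set.Icc (0:ℝ) x with hQdef
  have hQ : IsIntv Q := ⟨0, x, by linarith, rfl⟩
  have hxQ : x ∈ Q := ⟨by linarith, le_rfl⟩
  have hle : avgE (fun y => |myW y|) Q ≤ maxOp myW x := by
    unfold maxOp
    exact le_iSup_of_le Q (le_iSup_of_le hQ (le_iSup_of_le hxQ le_rfl))
  refine le_trans ?_ hle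
  rw [myW_avg]
  have hsub : Set.Icc (0:ℝ) 1 ⊆ Q := Set.Icc_subset_Icc le_rfl hx.le
  rw [Set.inter_eq_left.2 hsub]
  have hvol : volume (Set.Icc (0:ℝ) 1) = 1 := by simp
  rw [hvol, mul_one, hQdef, Real.volume_Icc, sub_zero,
    ← ENNReal.ofReal_inv_of_pos (by linarith : (0:ℝ) < x)]

lemma lintegral_inv_Ioi_one : ∫⁻ x in Set.Ioi (1:ℝ), ENNReal.ofReal x⁻¹ = ∞ := by
  by_contra h
  have hne : ∫⁻ x in Set.Ioi (1:ℝ), ENNReal.ofReal x⁻¹ < ∞ := lt_top_iff_ne_top.2 h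
  have hint : IntegrableOn (fun x : ℝ => x⁻¹) (Set.Ioi (1:ℝ)) := by
    refine ⟨measurable_inv.aestronglyMeasurable, ?_⟩
    rw [hasFiniteIntegral_iff_norm]
    refine lt_of_le_of_lt (le_of_eq (lintegral_congr_ae ?_)) hne
    filter_upwards [ae_restrict_mem measurableSet_Ioi] with x hx
    rw [Real.norm_eq_abs, abs_of_nonneg (inv_nonneg.2 (by linarith [mem_Ioi.1 hx]))]
  exact not_IntegrableOn_Ioi_inv hint

lemma myW_max_integral : ∫⁻ x, maxOp myW x = ∞ := by
  rw [eq_top_iff, ← lintegral_inv_Ioi_one]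
  calc ∫⁻ x in Set.Ioi (1:ℝ), ENNReal.ofReal x⁻¹
      ≤ ∫⁻ x in Set.Ioi (1:ℝ), maxOp myW x := by
        exact setLIntegral_mono' measurableSet_Ioi fun x hx => myW_max_lb hx
    _ ≤ ∫⁻ x, maxOp myW x := setLIntegral_le_lintegral _ _

/-- The mixed weak type estimate with `v = Mw` fails in general: there is a
weight `w` on `ℝ` (with `Mw` finite a.e.) for which no finite constant `c` satisfies
`sup_{t>0} t (Mw)({x : Mf(x) > t Mw(x)}) ≤ c ∫ |f| dx` uniformly over all `f ∈ L¹(ℝ)`. -/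
theorem stmt9 :
    ∃ w : ℝ → ℝ, IsWeight w ∧ (∀ᵐ x : ℝ, maxOp w x ≠ ∞) ∧
      ¬ ∃ c : ℝ≥0∞, c ≠ ∞ ∧
          ∀ f : ℝ → ℝ, Integrable f volume → ∀ t : ℝ, 0 < t →
            ENNReal.ofReal t *
                ∫⁻ x in {x : ℝ | ENNReal.ofReal t * maxOp w x < maxOp f x}, maxOp w x ≤
              c * ∫⁻ x, ENNReal.ofReal |f x| := by
  refine ⟨myW, ?_, ?_, ?_⟩
  · refine ⟨(measurable_const).indicator measurableSet_Icc, myW_nonneg, ?_⟩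
    have : Integrable myW volume := by
      unfold myW
      exact (integrable_indicator_iff measurableSet_Icc).2
        (integrableOn_const (by simp) (by simp))
    exact this.locallyIntegrable
  · exact Filter.Eventually.of_forall fun x =>
      ne_top_of_le_ne_top ENNReal.one_ne_top (myW_max_le_one x)
  · rintro ⟨c, hc, hineq⟩
    have hW_int : Integrable myW volume := by
      unfold myW
      exact (integrable_indicator_iff measurableSet_Icc).2
        (integrableOn_const (by simp) (by simp))
    have h := hineq myW hW_int (1/2) (by norm_num)
    have hset : {x : ℝ | ENNReal.ofReal (1/2) * maxOp myW x < maxOp myW x} = Set.univ := by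
      ext x
      simp only [Set.mem_setOf_eq, Set.mem_univ, iff_true]
      have h0 := myW_max_pos x
      have h1 := myW_max_le_one x
      have hne : maxOp myW x ≠ ∞ := ne_top_of_le_ne_top ENNReal.one_ne_top h1
      calc ENNReal.ofReal (1/2) * maxOp myW x
          < 1 * maxOp myW x := by
            rw [ENNReal.mul_lt_mul_iff_left h0.ne' hne]
            rw [← ENNReal.ofReal_one]
            exact ENNReal.ofReal_lt_ofReal_iff_of_nonneg (by norm_num) |>.2 (by norm_num)
        _ = maxOp myW x := one_mul _
    rw [hset, Measure.restrict_univ, myW_max_integral,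
      myW_lintegral volume] at h
    have hvol : volume (Set.Icc (0:ℝ) 1) = 1 := by simp
    rw [hvol, mul_one] at h
    have : ENNReal.ofReal (1/2) * ∞ = ∞ :=
      ENNReal.mul_top (by simp : ENNReal.ofReal (1/2) ≠ 0)
    rw [this, top_le_iff] at h
    exact hc h
end
end
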